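/- arXiv:1509.00632 — 6 statements merged into one kernel-verified Lean document; each statement's English description precedes it below -/
import Mathlib

section
/- Let C_V, C_W be metric spaces, E > 0, p_V ∈ C_V, p_W ∈ C_W. Suppose x, y, z are objects with projections to C_V and C_W such that each of x, y, z satisfies min{ d_W(π_W(·), p_W), d_V(π_V(·), p_V) } ≤ E, and suppose d_V(π_V(x), π_V(y)) > 10E, d_W(π_W(x), π_W(y)) > 10E, d_V(π_V(x), p_V) ≤ E, and d_W(π_W(y), p_W) ≤ E. Then there exists U ∈ {V, W} such that min{ d_U(π_U(z), π_U(x)), d_U(π_U(z), π_U(y)) } ≤ 10E. -/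
/-- Abstract form of the corollary: for transverse domains `V, W` on which `x, y` both
have large projection distance, any third point `z` is `10E`-close to one of `x, y`
in `C V` or in `C W`.  Here `pV = ρ^W_V` and `pW = ρ^V_W`. -/
theorem close_to_one_of_the_pair
    (V W : Type) [MetricSpace V] [MetricSpace W]
    (E : ℝ) (hE : 0 < E) (pV : V) (pW : W)
    (πVx πVy πVz : V) (πWx πWy πWz : W)
    (hconsx : min (dist πWx pW) (dist πVx pV) ≤ E)
    (hconsy : min (dist πWy pW) (dist πVy pV) ≤ E)
    (hconsz : min (dist πWz pW) (dist πVz pV) ≤ E)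
    (hV : 10 * E < dist πVx πVy)
    (hW : 10 * E < dist πWx πWy)
    (hxV : dist πVx pV ≤ E)
    (hyW : dist πWy pW ≤ E) :
    min (dist πVz πVx) (dist πVz πVy) ≤ 10 * E ∨
    min (dist πWz πWx) (dist πWz πWy) ≤ 10 * E := by
  rcases le_or_gt (dist πWz pW) E with h | h
  · right
    have := dist_triangle πWz pW πWy
    rw [dist_comm pW πWy] at this
    exact le_trans (min_le_right _ _) (by linarith)
  · left
    have hz : dist πVz pV ≤ E := by
      rcases min_le_iff.mp hconsz with h' | h'
      · linarith
      · exact h'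
    have := dist_triangle πVz pV πVx
    rw [dist_comm pV πVx] at this
    exact le_trans (min_le_left _ _) (by linarith)
end

section
/- Let (S, ⊑) be a partially ordered set with a symmetric, irreflexive relation ⊥ such that no two ⊥-related elements are ⊑-comparable, and such that whenever V ⊑ W and W ⊥ U, one has V ⊥ U. Assume the 'container axiom': for every T ∈ S and every U ⊑ T such that some V ⊑ T satisfies V ⊥ U, there exists W ∈ S with W ⊑ T, W ≠ T, such that every V with V ⊑ T and V ⊥ U satisfies V ⊑ W. Assume S has a ⊑-maximum element and that every chain in (S, ⊑) has cardinality at most n. Then every subset of S consisting of pairwise ⊥-related elements has cardinality at most n. -/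
/-- "Finite dimension" lemma for hierarchically hyperbolic spaces: the nesting and
orthogonality axioms (with containers for orthogonal complements) force
pairwise-orthogonal families to have cardinality at most the bound `n` on chains. -/
theorem pairwise_orthogonal_card_le
    (n : ℕ) (S : Type) [PartialOrder S]
    (perp : S → S → Prop)
    (hsymm : ∀ a b, perp a b → perp b a)
    (hirr : ∀ a, ¬ perp a a)
    (hnotcomp : ∀ a b, perp a b → ¬ (a ≤ b ∨ b ≤ a))
    (hinherit : ∀ V W U, V ≤ W → perp W U → perp V U)
    (hcontainer : ∀ T U : S, U ≤ T → (∃ V, V ≤ T ∧ perp V U) →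
      ∃ W, W ≤ T ∧ W ≠ T ∧ ∀ V, V ≤ T → perp V U → V ≤ W)
    (hmax : ∃ m : S, ∀ s : S, s ≤ m)
    (hchain : ∀ A : Finset S, IsChain (· ≤ ·) (A : Set S) → A.card ≤ n) :
    ∀ A : Finset S, (A : Set S).Pairwise perp → A.card ≤ n := by
  obtain ⟨m, hm⟩ := hmax
  suffices h : ∀ k (A : Finset S), A.card = k → (A : Set S).Pairwise perp →
      ∀ T : S, (∀ a ∈ A, a ≤ T) → ∃ C : Finset S, IsChain (· ≤ ·) (C : Set S) ∧
        C.card = A.card ∧ ∀ c ∈ C, c ≤ T by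
    intro A hA
    obtain ⟨C, hC, hcard, _⟩ := h A.card A rfl hA m (fun a _ => hm a)
    calc A.card = C.card := hcard.symm
    _ ≤ n := hchain C hC
  intro k
  induction k with
  | zero =>
    intro A hA _ T _
    exact ⟨∅, by simp [IsChain, Set.Pairwise], by simp [Finset.card_eq_zero.mp hA], by simp⟩
  | succ k ih =>
    intro A hA hperp T hT
    classical
    obtain ⟨U, hU⟩ : A.Nonempty := Finset.card_pos.mp (by omega)
    set A' := A.erase U with hA'def
    have hcard' : A'.card = k := by rw [hA'def, Finset.card_erase_of_mem hU, hA]; omega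
    rcases Nat.eq_zero_or_pos k with hk | hk
    · refine ⟨{T}, ?_, ?_, by simp⟩
      · intro x hx y hy hxy
        simp only [Finset.coe_singleton, Set.mem_singleton_iff] at hx hy
        exact absurd (hx.trans hy.symm) hxy
      · simp [hA, hk]
    · obtain ⟨V, hV⟩ : A'.Nonempty := Finset.card_pos.mp (by omega)
      have hVA : V ∈ A := Finset.mem_of_mem_erase hV
      have hVU : perp V U := hperp hVA hU (Finset.ne_of_mem_erase hV)
      obtain ⟨W, hWT, hWne, hW⟩ := hcontainer T U (hT U hU) ⟨V, hT V hVA, hVU⟩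
      have hperp' : (A' : Set S).Pairwise perp := by
        apply hperp.mono
        intro x hx
        exact Finset.mem_coe.mpr (Finset.mem_of_mem_erase (Finset.mem_coe.mp hx))
      have hA'W : ∀ a ∈ A', a ≤ W := fun a ha =>
        hW a (hT a (Finset.mem_of_mem_erase ha))
          (hperp (Finset.mem_of_mem_erase ha) hU (Finset.ne_of_mem_erase ha))
      obtain ⟨C, hC, hCcard, hCle⟩ := ih A' hcard' hperp' W hA'W
      have hTC : T ∉ C := fun h => hWne (le_antisymm hWT ((hCle T h).trans_eq rfl))
      refine ⟨insert T C, ?_, ?_, ?_⟩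
      · intro x hx y hy hxy
        simp only [Finset.coe_insert, Set.mem_insert_iff, Finset.mem_coe] at hx hy
        rcases hx with rfl | hx
        · rcases hy with rfl | hy
          · exact absurd rfl hxy
          · exact Or.inr ((hCle y hy).trans hWT)
        · rcases hy with rfl | hy
          · exact Or.inl ((hCle x hx).trans hWT)
          · exact hC hx hy hxy
      · rw [Finset.card_insert_of_notMem hTC, hCcard, hcard', hA]
      · intro c hc
        rcases Finset.mem_insert.mp hc with rfl | hc
        · exact le_refl c
        · exact (hCle c hc).trans hWT
end

section
/- Let n ∈ ℕ, let S be a (possibly infinite) index set, let L, s > 0 and M ≥ 2L + s. For each W ∈ S let φ_W : {0, 1, ..., n} → ℝ satisfy φ_W(0) = 0, φ_W(i) ≥ 0 for all i, and L-monotonicity: φ_W(i) ≤ φ_W(j) + L whenever i ≤ j. Suppose that for each j with 0 ≤ j < n there exists W_j ∈ S with φ_{W_j}(j+1) ≥ φ_{W_j}(j) + M. Then Σ_{W ∈ S} [φ_W(n)]_s ≥ n · s, where [t]_s = t if t ≥ s and [t]_s = 0 otherwise (the sum is over the finitely many W with [φ_W(n)]_s ≠ 0, namely those W = W_j for some j).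 -/
open scoped Classical

/-- Upper-bound half of the distance formula, abstracted: along an `L`-monotone discrete
path of length `n` in which each step makes a jump of at least `M ≥ 2L + s` in some
coordinate `W_j`, the sum of the `s`-thresholded final values is at least `n · s`. -/
theorem monotone_jumps_lower_bound_thresholded_sum
    (n : ℕ) (S : Type) [DecidableEq S] (L s M : ℝ)
    (hL : 0 < L) (hs : 0 < s) (hM : 2 * L + s ≤ M)
    (φ : S → ℕ → ℝ)
    (hzero : ∀ W, φ W 0 = 0)
    (hnonneg : ∀ W, ∀ i ≤ n, 0 ≤ φ W i)
    (hmono : ∀ W, ∀ i j : ℕ, i ≤ j → j ≤ n → φ W i ≤ φ W j + L)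
    (Wj : ℕ → S)
    (hjump : ∀ j < n, φ (Wj j) j + M ≤ φ (Wj j) (j + 1)) :
    (n : ℝ) * s ≤
      ∑ W ∈ Finset.image Wj (Finset.range n), (if s ≤ φ W n then φ W n else 0) := by
  classical
  -- key estimate: φ W m ≥ (#jumps in fiber of W below m) * (M - L) - L
  have key : ∀ W, ∀ m ≤ n,
      (((Finset.range m).filter (fun j => Wj j = W)).card : ℝ) * (M - L) - L ≤ φ W m := by
    intro W m
    induction m using Nat.strong_induction_on with
    | _ m IH =>
      intro hm
      set T := (Finset.range m).filter (fun j => Wj j = W) with hT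
      by_cases hE : T.Nonempty
      · set j := T.max' hE with hj
        have hjmem : j ∈ T := T.max'_mem hE
        have hjW : Wj j = W := (Finset.mem_filter.mp hjmem).2
        have hjlt : j < m := Finset.mem_range.mp (Finset.mem_filter.mp hjmem).1
        have herase : (Finset.range j).filter (fun i => Wj i = W) = T.erase j := by
          ext x
          simp only [Finset.mem_filter, Finset.mem_range, Finset.mem_erase, hT]
          constructor
          · rintro ⟨hx, hxW⟩
            exact ⟨Nat.ne_of_lt hx, ⟨lt_trans hx hjlt, hxW⟩⟩
          · rintro ⟨hne, hx, hxW⟩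
            have : x ≤ j := T.le_max' x (Finset.mem_filter.mpr ⟨Finset.mem_range.mpr hx, hxW⟩)
            exact ⟨lt_of_le_of_ne this hne, hxW⟩
        have hcard : ((Finset.range j).filter (fun i => Wj i = W)).card = T.card - 1 := by
          rw [herase, Finset.card_erase_of_mem hjmem]
        have hcardpos : 1 ≤ T.card := Finset.card_pos.mpr hE
        have hIH := IH j hjlt (le_trans (le_of_lt hjlt) hm)
        rw [hcard] at hIH
        have hjn : j < n := lt_of_lt_of_le hjlt hm
        have hjmp := hjump j hjn
        rw [hjW] at hjmp
        have hmo := hmono W (j + 1) m hjlt hm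
        have hcast : ((T.card - 1 : ℕ) : ℝ) = (T.card : ℝ) - 1 := by
          push_cast [hcardpos]; ring
        rw [hcast] at hIH
        nlinarith [hIH, hjmp, hmo]
      · have : T.card = 0 := Finset.card_eq_zero.mpr (Finset.not_nonempty_iff_eq_empty.mp hE)
        rw [this]
        have := hnonneg W m hm
        simpa using by linarith
  -- sum of fiber cards equals n
  have hsum : ∑ W ∈ Finset.image Wj (Finset.range n),
      ((Finset.range n).filter (fun j => Wj j = W)).card = n := by
    rw [← Finset.card_eq_sum_card_image Wj (Finset.range n), Finset.card_range]
  -- pointwise bound on image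
  have hpt : ∀ W ∈ Finset.image Wj (Finset.range n),
      (((Finset.range n).filter (fun j => Wj j = W)).card : ℝ) * s ≤
        (if s ≤ φ W n then φ W n else 0) := by
    intro W hW
    set k := ((Finset.range n).filter (fun j => Wj j = W)).card with hk
    have hkpos : 1 ≤ k := by
      obtain ⟨j, hj, hjW⟩ := Finset.mem_image.mp hW
      exact Finset.card_pos.mpr ⟨j, Finset.mem_filter.mpr ⟨hj, hjW⟩⟩
    have hkey := key W n le_rfl
    rw [← hk] at hkey
    have hk1 : (1 : ℝ) ≤ (k : ℝ) := by exact_mod_cast hkpos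
    have hφs : s ≤ φ W n := by nlinarith
    rw [if_pos hφs]
    nlinarith
  calc (n : ℝ) * s
      = ∑ W ∈ Finset.image Wj (Finset.range n),
          (((Finset.range n).filter (fun j => Wj j = W)).card : ℝ) * s := by
        rw [← Finset.sum_mul]
        congr 1
        exact_mod_cast hsum.symm
    _ ≤ _ := Finset.sum_le_sum hpt
end

section
/- Let κ ≥ 1 and E with 0 < E ≤ κ. Let S be a set of 'domains'; for each U ∈ S let C_U be a metric space with basepoints b_U ∈ C_U and x_U ∈ C_U (the projections of a tuple b and a point x), and for each ordered pair of distinct U, V ∈ S let ρ^V_U ∈ C_U be a point. Assume: (i) for all distinct U, V: min{ d_U(x_U, ρ^V_U), d_V(x_V, ρ^U_V) } ≤ E (consistency of x); and (ii) for all U ∈ S: d_U(x_U, b_U) > 100κ (relevance). Define U ⪯ V iff U = V or d_U(ρ^V_U, b_U) ≤ κ. Then ⪯ is antisymmetric: if U ≠ V and U ⪯ V, then not V ⪯ U. -/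
/-- Antisymmetry of the partial order on maximal relevant domains: `ρ U V ∈ C U` plays
the role of `ρ^V_U`; `x` is an `E`-consistent tuple and `b` is `100κ`-far from `x`
in every coordinate.  Define `U ⪯ V` iff `U = V` or `d_U(ρ^V_U, b_U) ≤ κ`; then
`U ≠ V` and `U ⪯ V` imply `¬ (V ⪯ U)`. -/
theorem relevant_order_antisymmetric
    (S : Type) (C : S → Type) [∀ U, MetricSpace (C U)]
    (κ E : ℝ) (hκ : 1 ≤ κ) (hE : 0 < E) (hEκ : E ≤ κ)
    (b x : ∀ U : S, C U)
    (ρ : ∀ U V : S, C U)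
    (hcons : ∀ U V : S, U ≠ V →
      min (dist (x U) (ρ U V)) (dist (x V) (ρ V U)) ≤ E)
    (hrel : ∀ U : S, 100 * κ < dist (x U) (b U)) :
    ∀ U V : S, U ≠ V → dist (ρ U V) (b U) ≤ κ → ¬ (dist (ρ V U) (b V) ≤ κ) := by
  intro U V hUV hU hV
  rcases min_le_iff.mp (hcons U V hUV) with h | h
  · have := hrel U
    have := dist_triangle (x U) (ρ U V) (b U)
    linarith
  · have := hrel V
    have := dist_triangle (x V) (ρ V U) (b V)
    linarith
end

section
/- Let X be a metric space, x, y ∈ X, K > 0 and r ≥ 0. Suppose α : {0, 1, ..., n} → X is a K-discrete path from x to y, i.e., α(0) = x, α(n) = y, and d(α(i), α(i+1)) ≤ K for all i < n. Then there exists m ≤ n and a strictly increasing map σ : {0, ..., m} → {0, ..., n} with σ(0) = 0, σ(m) = n, such that the path β = α ∘ σ satisfies: d(β(i), β(i+1)) ∈ [r, r + K] for all 0 ≤ i < m − 1, and d(β(m−1), β(m)) ≤ r + K. -/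
private theorem discrete_path_proper_sampling_aux
    (X : Type) [MetricSpace X] (K r : ℝ) (hK : 0 < K) (hr : 0 ≤ r) :
    ∀ n (α : ℕ → X), (∀ i < n, dist (α i) (α (i + 1)) ≤ K) →
    ∃ m ≤ n, ∃ σ : ℕ → ℕ,
      σ 0 = 0 ∧ σ m = n ∧
      (∀ i j : ℕ, i < j → j ≤ m → σ i < σ j) ∧
      (∀ i : ℕ, i + 1 < m →
        r ≤ dist (α (σ i)) (α (σ (i + 1))) ∧
        dist (α (σ i)) (α (σ (i + 1))) ≤ r + K) ∧
      (1 ≤ m → dist (α (σ (m - 1))) (α (σ m)) ≤ r + K) := by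
  intro n
  induction n using Nat.strong_induction_on with
  | _ n IH =>
  intro α hdisc
  rcases Nat.eq_zero_or_pos n with hn0 | hn0
  · subst hn0
    exact ⟨0, le_refl 0, id, rfl, rfl, by omega, by omega, by omega⟩
  classical
  by_cases hex : ∃ j, 1 ≤ j ∧ j ≤ n ∧ r ≤ dist (α 0) (α j)
  · set t := Nat.find hex with ht
    obtain ⟨ht1, htn, htr⟩ := Nat.find_spec hex
    have hprev : dist (α 0) (α (t - 1)) ≤ r := by
      rcases Nat.eq_or_lt_of_le ht1 with h1 | h1
      · have : t - 1 = 0 := by omega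
        simp [this, hr]
      · have hmin := Nat.find_min hex (m := t - 1) (by omega)
        push_neg at hmin
        have := hmin (by omega) (by omega)
        linarith
    have hstep : dist (α 0) (α t) ≤ r + K := by
      have h1 : dist (α 0) (α t) ≤ dist (α 0) (α (t-1)) + dist (α (t-1)) (α t) :=
        dist_triangle _ _ _
      have h2 : dist (α (t-1)) (α t) ≤ K := by
        have h := hdisc (t-1) (by omega)
        have ht' : t - 1 + 1 = t := by omega
        rwa [ht'] at h
      linarith
    obtain ⟨m', hm', σ', hσ0, hσm, hmono, hmid, hlast⟩ :=
      IH (n - t) (by omega) (fun i => α (t + i)) (fun i hi => by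
        have := hdisc (t + i) (by omega)
        simpa [Nat.add_assoc] using this)
    refine ⟨m' + 1, by omega, fun i => if i = 0 then 0 else t + σ' (i - 1),
      by simp, ?_, ?_, ?_, ?_⟩
    · simp only [Nat.add_sub_cancel, if_neg (Nat.succ_ne_zero m'), hσm]
      omega
    · intro i j hij hjm
      have hj : j ≠ 0 := by omega
      by_cases hi : i = 0
      · subst hi
        simp only [if_neg hj]
        simp only [reduceIte]
        omega
      · simp only [if_neg hi, if_neg hj]
        have := hmono (i - 1) (j - 1) (by omega) (by omega)
        omega
    · intro i hi
      by_cases hi0 : i = 0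
      · subst hi0
        simp only [if_pos rfl, if_neg (Nat.succ_ne_zero 0), Nat.add_sub_cancel, hσ0,
          Nat.add_zero]
        exact ⟨htr, hstep⟩
      · have h1 : i + 1 ≠ 0 := by omega
        simp only [if_neg hi0, if_neg h1, Nat.add_sub_cancel]
        have h := hmid (i - 1) (by omega)
        have hi' : i - 1 + 1 = i := by omega
        rw [hi'] at h
        exact h
    · intro _
      simp only [Nat.add_sub_cancel, if_neg (Nat.succ_ne_zero m')]
      rcases Nat.eq_zero_or_pos m' with h0 | h0
      · subst h0
        simp only [if_pos rfl, hσ0, Nat.add_zero]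
        exact hstep
      · have hne : m' ≠ 0 := by omega
        simp only [if_neg hne]
        exact hlast h0
  · push_neg at hex
    refine ⟨1, hn0, fun i => if i = 0 then 0 else n, by simp, by simp, ?_, ?_, ?_⟩
    · intro i j hij hjm
      have : i = 0 ∧ j = 1 := by omega
      obtain ⟨rfl, rfl⟩ := this
      simpa using hn0
    · intro i hi; omega
    · intro _
      have := hex n hn0 (le_refl n)
      simp only [Nat.sub_self, reduceIte, if_neg (Nat.one_ne_zero)]
      linarith

/-- Sampling lemma: a `K`-discrete path can be made `(r,K)`-proper by passing to a
subsequence: consecutive sampled points are at distance in `[r, r+K]`, except possibly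
the last step, which is at most `r + K`. -/
theorem discrete_path_proper_sampling
    (X : Type) [MetricSpace X] (x y : X) (K r : ℝ) (hK : 0 < K) (hr : 0 ≤ r)
    (n : ℕ) (α : ℕ → X) (h0 : α 0 = x) (hn : α n = y)
    (hdisc : ∀ i < n, dist (α i) (α (i + 1)) ≤ K) :
    ∃ m ≤ n, ∃ σ : ℕ → ℕ,
      σ 0 = 0 ∧ σ m = n ∧
      (∀ i j : ℕ, i < j → j ≤ m → σ i < σ j) ∧
      (∀ i : ℕ, i + 1 < m →
        r ≤ dist (α (σ i)) (α (σ (i + 1))) ∧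
        dist (α (σ i)) (α (σ (i + 1))) ≤ r + K) ∧
      (1 ≤ m → dist (α (σ (m - 1))) (α (σ m)) ≤ r + K) :=
  discrete_path_proper_sampling_aux X K r hK hr n α hdisc
end

section
/- Let G be a graph and let ∼ be the relation on the vertex set defined as the transitive closure of a symmetric relation ∼_d. Suppose (S, ⊑) is a poset with the property (from Lemma 'no_cycle'): for vertices of a fixed poset S_v assigned to each vertex v of a tree, if U, U' ∈ S_v satisfy U ⊑ U' and U ∼ U', then U = U'. Then the relation on ∼-classes defined by [V] ⊑ [W] iff some vertex v carries representatives V_v ⊑ W_v is antisymmetric, provided that whenever V_v ∼ V_w and V_v ⊑ U_v with U_v ∼ U_w, there exists V'_w ∼ V_v with V'_w ⊑ U_w ('fullness propagates nesting along the tree'). -/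
/-- Antisymmetry of nesting of `∼`-classes in a tree of HHSs: domains form a poset `S`,
each domain sits at a vertex (`vert`), nesting only relates domains at a common vertex,
`∼` is an equivalence relation (the transitive closure of the symmetric relation
`∼_d`), the "no cycle" property says nested `∼`-equivalent domains are equal, and
fullness propagates nesting along `∼`.  Then the induced relation on `∼`-classes,
`[V] ⊑ [W]` iff some vertex carries representatives `V₁ ≤ W₁`, is antisymmetric. -/
theorem class_nesting_antisymmetric
    (S V : Type) [PartialOrder S] (vert : S → V)
    (sim : S → S → Prop) (hequiv : Equivalence sim)
    (hsame : ∀ a b : S, a ≤ b → vert a = vert b)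
    (hnocycle : ∀ a b : S, a ≤ b → sim a b → a = b)
    (hfull : ∀ a a' c : S, sim a a' → c ≤ a → ∃ c' : S, sim c c' ∧ c' ≤ a') :
    ∀ a b : S,
      (∃ a₁ b₁ : S, sim a a₁ ∧ sim b b₁ ∧ a₁ ≤ b₁) →
      (∃ b₂ a₂ : S, sim b b₂ ∧ sim a a₂ ∧ b₂ ≤ a₂) →
      sim a b := by
  intro a b ⟨a₁, b₁, hA1, hB1, h1⟩ ⟨b₂, a₂, hB2, hA2, h2⟩
  obtain ⟨a₁', hsim, hle⟩ := hfull b₁ b₂ a₁ (hequiv.trans (hequiv.symm hB1) hB2) h1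
  have heq : a₁' = a₂ := hnocycle _ _ (le_trans hle h2)
    (hequiv.trans (hequiv.symm hsim) (hequiv.trans (hequiv.symm hA1) hA2))
  have : b₂ = a₁' := le_antisymm (heq ▸ h2) hle
  exact hequiv.trans (hequiv.trans hA1 hsim) (hequiv.symm (this ▸ hB2))
end
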